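/- arXiv:2105.07038 — 2 statements merged into one kernel-verified Lean document; each statement's English description precedes it below -/
import Mathlib

section
/- For every integer k ≥ 2, let K_{2k+1,2(k)} denote the complete (k+1)-partite graph with one part of size 2k+1 and k parts of size 2. Then D_2^2(K_{2k+1,2(k)}) = 3; that is: (i) every 2-coloring of the edges of K_{2k+1,2(k)} admits two monochromatic subgraphs, each of diameter at most 3, whose vertex sets cover all vertices, and (ii) there exists a 2-coloring of the edges of K_{2k+1,2(k)} such that no two monochromatic subgraphs, each of diameter at most 2, have vertex sets covering all vertices. -/
open SimpleGraph

/-- The spanning subgraph of `G` consisting of the edges that receive color `b`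
under the edge-coloring `c`. -/
def SimpleGraph.colorSubgraph {V : Type*} (G : SimpleGraph V) (c : Sym2 V → Bool) (b : Bool) :
    SimpleGraph V where
  Adj u v := G.Adj u v ∧ c s(u, v) = b
  symm := ⟨fun u v h => ⟨h.1.symm, by rw [Sym2.eq_swap]; exact h.2⟩⟩
  loopless := ⟨fun u h => G.loopless.1 u h.1⟩

/-- There are two monochromatic connected subgraphs, each of diameter at most `d`,
whose vertex sets together cover all of `V`. -/
def HasMonoCover {V : Type*} (G : SimpleGraph V) (c : Sym2 V → Bool) (d : ℕ) : Prop :=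
  ∃ (S₁ S₂ : Set V) (b₁ b₂ : Bool),
    (SimpleGraph.induce S₁ (G.colorSubgraph c b₁)).Connected ∧
    (SimpleGraph.induce S₁ (G.colorSubgraph c b₁)).ediam ≤ (d : ℕ∞) ∧
    (SimpleGraph.induce S₂ (G.colorSubgraph c b₂)).Connected ∧
    (SimpleGraph.induce S₂ (G.colorSubgraph c b₂)).ediam ≤ (d : ℕ∞) ∧
    S₁ ∪ S₂ = Set.univ

variable {V : Type*}

lemma adj_edist_le_one {H : SimpleGraph V} {x y : V} (h : H.Adj x y) : H.edist x y ≤ 1 := by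
  refine le_trans (SimpleGraph.edist_le (SimpleGraph.Walk.cons h SimpleGraph.Walk.nil)) ?_
  simp

lemma star_bound (H : SimpleGraph V) (S : Set V) (u : V) (hu : u ∈ S)
    (h : ∀ x ∈ S, x = u ∨ H.Adj u x) :
    (SimpleGraph.induce S H).Connected ∧ (SimpleGraph.induce S H).ediam ≤ 2 := by
  set H' := SimpleGraph.induce S H with hH'
  have key : ∀ x : S, H'.edist x ⟨u, hu⟩ ≤ 1 := by
    rintro ⟨x, hx⟩
    rcases h x hx with rfl | hadj
    · simp [SimpleGraph.edist_self]
    · exact adj_edist_le_one (by exact hadj.symm)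
  constructor
  · rw [connected_iff]
    refine ⟨fun x y => ?_, ⟨⟨u, hu⟩⟩⟩
    have hx := key x; have hy := key y
    have hx' : H'.edist x ⟨u, hu⟩ ≠ ⊤ := by intro hh; rw [hh] at hx; simp at hx
    have hy' : H'.edist y ⟨u, hu⟩ ≠ ⊤ := by intro hh; rw [hh] at hy; simp at hy
    exact (SimpleGraph.reachable_of_edist_ne_top hx').trans
      (SimpleGraph.reachable_of_edist_ne_top hy').symm
  · refine SimpleGraph.ediam_le_of_edist_le fun x y => ?_
    calc H'.edist x y ≤ H'.edist x ⟨u, hu⟩ + H'.edist ⟨u, hu⟩ y := SimpleGraph.edist_triangle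
    _ ≤ 1 + 1 := add_le_add (key x) (by rw [SimpleGraph.edist_comm]; exact key y)
    _ ≤ 2 := by norm_num

lemma doubleStar_bound (H : SimpleGraph V) (S : Set V) (u w : V) (hu : u ∈ S) (hw : w ∈ S)
    (huw : H.Adj u w)
    (h : ∀ x ∈ S, x = u ∨ x = w ∨ H.Adj u x ∨ H.Adj w x) :
    (SimpleGraph.induce S H).Connected ∧ (SimpleGraph.induce S H).ediam ≤ 3 := by
  set H' := SimpleGraph.induce S H with hH'
  set U : S := ⟨u, hu⟩
  set W : S := ⟨w, hw⟩
  have hUW : H'.Adj U W := by exact huw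
  have key : ∀ x : S, H'.edist x U ≤ 1 ∨ H'.edist x W ≤ 1 := by
    rintro ⟨x, hx⟩
    rcases h x hx with rfl | rfl | hadj | hadj
    · left; exact le_trans (le_of_eq SimpleGraph.edist_self) zero_le
    · right; exact le_trans (le_of_eq SimpleGraph.edist_self) zero_le
    · left; exact adj_edist_le_one (by exact hadj.symm)
    · right; exact adj_edist_le_one (by exact hadj.symm)
  have keyU : ∀ x : S, H'.edist x U ≤ 2 := by
    intro x
    rcases key x with h1 | h1
    · exact le_trans h1 (by norm_num)
    · calc H'.edist x U ≤ H'.edist x W + H'.edist W U := SimpleGraph.edist_triangle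
      _ ≤ 1 + 1 := add_le_add h1 (adj_edist_le_one hUW.symm)
      _ ≤ 2 := by norm_num
  constructor
  · rw [connected_iff]
    refine ⟨fun x y => ?_, ⟨U⟩⟩
    have hx := keyU x; have hy := keyU y
    have hx' : H'.edist x U ≠ ⊤ := by intro hh; rw [hh] at hx; simp at hx
    have hy' : H'.edist y U ≠ ⊤ := by intro hh; rw [hh] at hy; simp at hy
    exact (SimpleGraph.reachable_of_edist_ne_top hx').trans
      (SimpleGraph.reachable_of_edist_ne_top hy').symm
  · refine SimpleGraph.ediam_le_of_edist_le fun x y => ?_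
    rcases key x with h1 | h1 <;> rcases key y with h2 | h2
    · calc H'.edist x y ≤ H'.edist x U + H'.edist U y := SimpleGraph.edist_triangle
      _ ≤ 1 + 1 := add_le_add h1 (by rw [SimpleGraph.edist_comm]; exact h2)
      _ ≤ 3 := by norm_num
    · calc H'.edist x y ≤ H'.edist x U + (H'.edist U W + H'.edist W y) :=
        le_trans SimpleGraph.edist_triangle (by
          gcongr; exact SimpleGraph.edist_triangle)
      _ ≤ 1 + (1 + 1) := by
          refine add_le_add h1 (add_le_add (adj_edist_le_one hUW) ?_)
          rw [SimpleGraph.edist_comm]; exact h2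
      _ ≤ 3 := by norm_num
    · calc H'.edist x y ≤ H'.edist x W + (H'.edist W U + H'.edist U y) :=
        le_trans SimpleGraph.edist_triangle (by
          gcongr; exact SimpleGraph.edist_triangle)
      _ ≤ 1 + (1 + 1) := by
          refine add_le_add h1 (add_le_add (adj_edist_le_one hUW.symm) ?_)
          rw [SimpleGraph.edist_comm]; exact h2
      _ ≤ 3 := by norm_num
    · calc H'.edist x y ≤ H'.edist x W + H'.edist W y := SimpleGraph.edist_triangle
      _ ≤ 1 + 1 := add_le_add h1 (by rw [SimpleGraph.edist_comm]; exact h2)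
      _ ≤ 3 := by norm_num

lemma mono2 {H : SimpleGraph V} {S : Set V} (hd : (SimpleGraph.induce S H).ediam ≤ 2)
    {x y : V} (hx : x ∈ S) (hy : y ∈ S) (hxy : x ≠ y) :
    H.Adj x y ∨ ∃ z ∈ S, H.Adj x z ∧ H.Adj z y := by
  set H' := SimpleGraph.induce S H with hH'
  have hle : H'.edist ⟨x, hx⟩ ⟨y, hy⟩ ≤ 2 := le_trans SimpleGraph.edist_le_ediam hd
  have hne : H'.edist ⟨x, hx⟩ ⟨y, hy⟩ ≠ ⊤ := by
    intro hh; rw [hh] at hle; exact absurd hle (by simp)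
  obtain ⟨p, hp⟩ := SimpleGraph.exists_walk_of_edist_ne_top hne
  have hlen : (p.length : ℕ∞) ≤ 2 := by rw [hp]; exact hle
  have hlen' : p.length ≤ 2 := by exact_mod_cast hlen
  match p, hlen' with
  | SimpleGraph.Walk.nil, _ => exact absurd rfl hxy
  | SimpleGraph.Walk.cons h SimpleGraph.Walk.nil, _ => exact Or.inl h
  | SimpleGraph.Walk.cons (v := z) h1 (SimpleGraph.Walk.cons h2 SimpleGraph.Walk.nil), _ =>
      exact Or.inr ⟨z.1, z.2, h1, h2⟩
  | SimpleGraph.Walk.cons _ (SimpleGraph.Walk.cons _ (SimpleGraph.Walk.cons _ _)), hl =>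
      simp [SimpleGraph.Walk.length_cons] at hl

section
variable (k : ℕ)

abbrev Vt (k : ℕ) : Type := Σ i : Fin (k + 1), Fin (if i = 0 then 2 * k + 1 else 2)

lemma fin_one_ne_zero (hk : 2 ≤ k) : (1 : Fin (k + 1)) ≠ 0 := by
  intro h
  have := congrArg Fin.val h
  rw [Fin.val_one'] at this
  simp [Nat.mod_eq_of_lt (by omega : 1 < k + 1)] at this

lemma size_one (hk : 2 ≤ k) :
    (if (1 : Fin (k + 1)) = 0 then 2 * k + 1 else 2) = 2 := if_neg (fin_one_ne_zero k hk)

lemma part_one_eq (hk : 2 ≤ k) (v : Vt k) (hv : v.1 = 1) :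
    v = ⟨1, ⟨0, by rw [size_one k hk]; omega⟩⟩ ∨ v = ⟨1, ⟨1, by rw [size_one k hk]; omega⟩⟩ := by
  obtain ⟨i, t⟩ := v
  subst hv
  have ht : t.val < 2 := by have h := t.isLt; have h2 := size_one k hk; omega
  interval_cases h : t.val
  · left; congr 1; exact Fin.ext h
  · right; congr 1; exact Fin.ext h


end

abbrev Gk (k : ℕ) : SimpleGraph (Vt k) :=
  completeMultipartiteGraph (fun i : Fin (k + 1) => Fin (if i = 0 then 2 * k + 1 else 2))

def Mi (k : ℕ) (v : Vt k) : ℕ := 2 * v.1.val - 1 + v.2.val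

def fcol (k : ℕ) : Vt k → Vt k → Bool := fun u v =>
  if u.1 = 0 ∧ v.1 ≠ 0 then decide (u.2.val ≠ 0 ∧ u.2.val ≠ Mi k v)
  else if v.1 = 0 ∧ u.1 ≠ 0 then decide (v.2.val ≠ 0 ∧ v.2.val ≠ Mi k u)
  else false

lemma fcol_symm (k : ℕ) : ∀ u v : Vt k, fcol k u v = fcol k v u := by
  intro u v
  unfold fcol
  by_cases h1 : u.1 = 0 ∧ v.1 ≠ 0 <;> by_cases h2 : v.1 = 0 ∧ u.1 ≠ 0
  · exact absurd h1.1 h2.2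
  · rw [if_pos h1, if_neg h2, if_pos h1]
  · rw [if_neg h1, if_pos h2, if_pos h2]
  · rw [if_neg h1, if_neg h2, if_neg h2, if_neg h1]

def lcol (k : ℕ) : Sym2 (Vt k) → Bool := Sym2.lift ⟨fcol k, fcol_symm k⟩

lemma lcol_mk (k : ℕ) (u v : Vt k) : lcol k s(u, v) = fcol k u v := Sym2.lift_mk ..

section
variable {k : ℕ}

lemma part_val_lt {v : Vt k} (hv : v.1 ≠ 0) : v.2.val < 2 := by
  have h := v.2.isLt
  have h2 : (if v.1 = 0 then 2 * k + 1 else 2) = 2 := if_neg hv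
  omega

lemma part_val_pos {v : Vt k} (hv : v.1 ≠ 0) : 1 ≤ v.1.val := by
  have : v.1.val ≠ 0 := fun h => hv (Fin.ext h)
  omega

lemma part_val_le {v : Vt k} : v.1.val ≤ k := by have := v.1.isLt; omega

lemma Mi_range {v : Vt k} (hv : v.1 ≠ 0) : 1 ≤ Mi k v ∧ Mi k v ≤ 2 * k := by
  have h1 := part_val_lt hv
  have h2 := part_val_pos hv
  have h3 := part_val_le (v := v)
  unfold Mi; omega

lemma Mi_inj {w z : Vt k} (hw : w.1 ≠ 0) (hz : z.1 ≠ 0) (h : Mi k w = Mi k z) : w = z := by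
  have h1 := part_val_lt hw
  have h2 := part_val_pos hw
  have h3 := part_val_lt hz
  have h4 := part_val_pos hz
  unfold Mi at h
  have hi : w.1.val = z.1.val := by omega
  have ht : w.2.val = z.2.val := by omega
  obtain ⟨i, t⟩ := w
  obtain ⟨i', t'⟩ := z
  simp only at hi ht
  have : i = i' := Fin.ext hi
  subst this
  congr 1
  exact Fin.ext ht

lemma A_ext {x y : Vt k} (hx : x.1 = 0) (hy : y.1 = 0) (h : x.2.val = y.2.val) : x = y := by
  obtain ⟨i, t⟩ := x
  obtain ⟨i', t'⟩ := y
  simp only at hx hy h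
  subst hx; subst hy
  congr 1
  exact Fin.ext h

-- adjacency characterizations
lemma mono_adj_parts {b : Bool} {u v : Vt k} (h : ((Gk k).colorSubgraph (lcol k) b).Adj u v) :
    u.1 ≠ v.1 := by
  have := h.1
  simpa using this

lemma red_cases {u v : Vt k} (h : ((Gk k).colorSubgraph (lcol k) true).Adj u v) :
    (u.1 = 0 ∧ v.1 ≠ 0 ∧ u.2.val ≠ 0 ∧ u.2.val ≠ Mi k v) ∨
    (v.1 = 0 ∧ u.1 ≠ 0 ∧ v.2.val ≠ 0 ∧ v.2.val ≠ Mi k u) := by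
  have hne := mono_adj_parts h
  have hc := h.2
  rw [lcol_mk] at hc
  unfold fcol at hc
  by_cases h1 : u.1 = 0 ∧ v.1 ≠ 0
  · rw [if_pos h1] at hc; left; refine ⟨h1.1, h1.2, ?_⟩; simpa using hc
  · rw [if_neg h1] at hc
    by_cases h2 : v.1 = 0 ∧ u.1 ≠ 0
    · rw [if_pos h2] at hc; right; refine ⟨h2.1, h2.2, ?_⟩; simpa using hc
    · rw [if_neg h2] at hc; simp at hc

lemma blue_A_char {u v : Vt k} (hu : u.1 = 0) (hj : u.2.val ≠ 0)
    (h : ((Gk k).colorSubgraph (lcol k) false).Adj u v) : v.1 ≠ 0 ∧ Mi k v = u.2.val := by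
  have hne := mono_adj_parts h
  have hv : v.1 ≠ 0 := fun hh => hne (hu.trans hh.symm)
  refine ⟨hv, ?_⟩
  have hc := h.2
  rw [lcol_mk] at hc
  unfold fcol at hc
  rw [if_pos ⟨hu, hv⟩] at hc
  simp only [decide_eq_false_iff_not, not_and, ne_eq, not_not] at hc
  exact (hc hj).symm


section
variable {k : ℕ}

abbrev Hb (k : ℕ) (b : Bool) : SimpleGraph (Vt k) := (Gk k).colorSubgraph (lcol k) b

def AxV (k : ℕ) (j : ℕ) (hj : j < 2 * k + 1) : Vt k := ⟨0, ⟨j, by simpa using hj⟩⟩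

lemma AxV_fst (j : ℕ) (hj : j < 2 * k + 1) : (AxV k j hj).1 = 0 := rfl
lemma AxV_val (j : ℕ) (hj : j < 2 * k + 1) : (AxV k j hj).2.val = j := rfl

lemma AxV_inj {j j' : ℕ} {hj : j < 2 * k + 1} {hj' : j' < 2 * k + 1}
    (h : AxV k j hj = AxV k j' hj') : j = j' :=
  congrArg (fun v : Vt k => v.2.val) h

-- a0 as abbreviation
def a0 (k : ℕ) : Vt k := ⟨0, ⟨0, by simp⟩⟩

lemma a0_eq : a0 k = AxV k 0 (by omega) := rfl

lemma blue_one {S : Set (Vt k)} (hd : (SimpleGraph.induce S (Hb k false)).ediam ≤ 2)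
    {x y : Vt k} (hx : x ∈ S) (hy : y ∈ S) (hx0 : x.1 = 0) (hy0 : y.1 = 0)
    (hxv : x.2.val ≠ 0) (hyv : y.2.val ≠ 0) : x = y := by
  by_contra hne
  rcases mono2 hd hx hy hne with hadj | ⟨z, hz, h1, h2⟩
  · exact mono_adj_parts hadj (hx0.trans hy0.symm)
  · have c1 := blue_A_char hx0 hxv h1
    have c2 := blue_A_char hy0 hyv h2.symm
    exact hne (A_ext hx0 hy0 (c1.2.symm.trans c2.2))

lemma red_not_adj_a0 {v : Vt k} (h : (Hb k true).Adj (a0 k) v) : False := by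
  rcases red_cases h with ⟨_, _, h3, _⟩ | ⟨_, h2, _⟩
  · exact h3 rfl
  · exact h2 rfl

lemma red_noA0 {S : Set (Vt k)} (hd : (SimpleGraph.induce S (Hb k true)).ediam ≤ 2)
    {v : Vt k} (h0 : a0 k ∈ S) (hv : v ∈ S) (hne : v ≠ a0 k) : False := by
  rcases mono2 hd h0 hv (Ne.symm hne) with hadj | ⟨z, hz, h1, h2⟩
  · exact red_not_adj_a0 hadj
  · exact red_not_adj_a0 h1

lemma red_pair {S : Set (Vt k)} (hd : (SimpleGraph.induce S (Hb k true)).ediam ≤ 2)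
    {w vA : Vt k} (hw : w ∈ S) (hvA : vA ∈ S) (hw0 : w.1 ≠ 0) (hA : vA.1 = 0)
    (hval : vA.2.val = Mi k w) : False := by
  have hne : vA ≠ w := fun h => hw0 (h ▸ hA)
  rcases mono2 hd hvA hw hne with hadj | ⟨z, hz, h1, h2⟩
  · rcases red_cases hadj with ⟨_, _, _, h4⟩ | ⟨_, h2', _⟩
    · exact h4 hval
    · exact h2' hA
  · have hz0 : z.1 ≠ 0 := by
      rcases red_cases h1 with ⟨_, hz1, _⟩ | ⟨_, h2', _⟩
      · exact hz1
      · exact absurd hA h2'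
    rcases red_cases h2 with ⟨hz1, _⟩ | ⟨hw1, _⟩
    · exact hz0 hz1
    · exact hw0 hw1

lemma red_commonB {S : Set (Vt k)} (hd : (SimpleGraph.induce S (Hb k true)).ediam ≤ 2)
    {x y : Vt k} (hx : x ∈ S) (hy : y ∈ S) (hx0 : x.1 = 0) (hy0 : y.1 = 0)
    (hne : x ≠ y) : ∃ z ∈ S, z.1 ≠ 0 := by
  rcases mono2 hd hx hy hne with hadj | ⟨z, hz, h1, h2⟩
  · exact absurd (hx0.trans hy0.symm) (mono_adj_parts hadj)
  · refine ⟨z, hz, ?_⟩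
    rcases red_cases h1 with ⟨_, hz1, _⟩ | ⟨_, h2', _⟩
    · exact hz1
    · exact absurd hx0 h2'

lemma red_big (hk : 2 ≤ k) {S : Set (Vt k)}
    (hd : (SimpleGraph.induce S (Hb k true)).ediam ≤ 2)
    (hall : ∀ j (hj1 : 1 ≤ j) (hj2 : j ≤ 2 * k), AxV k j (by omega) ∈ S) : False := by
  have h1 : AxV k 1 (by omega) ∈ S := hall 1 (by omega) (by omega)
  have h2 : AxV k 2 (by omega) ∈ S := hall 2 (by omega) (by omega)
  have hne : AxV k 1 (by omega) ≠ AxV k 2 (by omega) := fun h => by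
    have := AxV_inj h; omega
  obtain ⟨z, hz, hz0⟩ := red_commonB hd h1 h2 rfl rfl hne
  have hr := Mi_range hz0
  exact red_pair hd hz (hall (Mi k z) hr.1 hr.2) hz0 rfl rfl

lemma core_rb (hk : 2 ≤ k) {Sr Sb : Set (Vt k)}
    (hdr : (SimpleGraph.induce Sr (Hb k true)).ediam ≤ 2)
    (hdb : (SimpleGraph.induce Sb (Hb k false)).ediam ≤ 2)
    (hcov : ∀ v, v ∈ Sr ∨ v ∈ Sb) : False := by
  by_cases h0 : a0 k ∈ Sr
  · -- everything else in Sb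
    have hrest : ∀ v : Vt k, v ≠ a0 k → v ∈ Sb := by
      intro v hv
      rcases hcov v with h | h
      · exact absurd (red_noA0 hdr h0 h hv) not_false
      · exact h
    have hA1 : AxV k 1 (by omega) ∈ Sb := hrest _ (fun h => by have := AxV_inj (h.trans a0_eq); omega)
    have hA2 : AxV k 2 (by omega) ∈ Sb := hrest _ (fun h => by have := AxV_inj (h.trans a0_eq); omega)
    have := blue_one hdb hA1 hA2 rfl rfl (by simp [AxV_val]) (by simp [AxV_val])
    have := AxV_inj this; omega
  · have h0b : a0 k ∈ Sb := (hcov (a0 k)).resolve_left h0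
    by_cases hall : ∀ j, 1 ≤ j → ∀ (hj2 : j ≤ 2 * k), AxV k j (by omega) ∈ Sr
    · exact red_big hk hdr (fun j hj1 hj2 => hall j hj1 hj2)
    · push_neg at hall
      obtain ⟨J, hJ1, hJ2, hJSr⟩ := hall
      have hJSb : AxV k J (by omega) ∈ Sb := (hcov _).resolve_left hJSr
      have uniq : ∀ j, 1 ≤ j → ∀ (hj2 : j ≤ 2 * k), AxV k j (by omega) ∉ Sr → j = J := by
        intro j hj1 hj2 hjSr
        have hjSb : AxV k j (by omega) ∈ Sb := (hcov _).resolve_left hjSr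
        have := blue_one hdb hjSb hJSb rfl rfl (by simp [AxV_val]; omega) (by simp [AxV_val]; omega)
        exact AxV_inj this
      -- construct the matched B-vertex wJ and its part-partner b'
      have hiJval : (J + 1) / 2 < k + 1 := by omega
      set iJ : Fin (k + 1) := ⟨(J + 1) / 2, hiJval⟩ with hiJdef
      have hiJ : iJ ≠ 0 := by
        intro h
        have := congrArg Fin.val h
        simp [hiJdef] at this
        omega
      have hsize : (if iJ = 0 then 2 * k + 1 else 2) = 2 := if_neg hiJ
      set wJ : Vt k := ⟨iJ, ⟨(J + 1) % 2, by rw [hsize]; omega⟩⟩ with hwJdef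
      set b' : Vt k := ⟨iJ, ⟨1 - (J + 1) % 2, by rw [hsize]; omega⟩⟩ with hb'def
      have hwJ1 : wJ.1 ≠ 0 := hiJ
      have hb'1 : b'.1 ≠ 0 := hiJ
      have hMiwJ : Mi k wJ = J := by
        show 2 * ((J + 1) / 2) - 1 + (J + 1) % 2 = J
        omega
      have hMib' : Mi k b' = 2 * ((J + 1) / 2) - 1 + (1 - (J + 1) % 2) := rfl
      have hJ2ne : Mi k b' ≠ J := by rw [hMib']; omega
      have hJ2range : 1 ≤ Mi k b' ∧ Mi k b' ≤ 2 * k := Mi_range hb'1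
      rcases hcov b' with hb'Sr | hb'Sb
      · -- b' in red set; then AxV (Mi b') must be in Sr, contradiction with red_pair
        have hAx : AxV k (Mi k b') (by omega) ∈ Sr := by
          by_contra hnot
          exact hJ2ne (uniq _ hJ2range.1 hJ2range.2 hnot)
        exact red_pair hdr hb'Sr hAx hb'1 rfl rfl
      · -- b' in blue set together with AxV J
        have hne : AxV k J (by omega) ≠ b' := by
          intro h
          exact hiJ (congrArg Sigma.fst h).symm
        rcases mono2 hdb hJSb hb'Sb hne with hadj | ⟨z, hz, h1, h2⟩
        · have := (blue_A_char rfl (by simp [AxV_val]; omega) hadj).2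
          rw [AxV_val] at this
          exact hJ2ne this
        · have c1 := blue_A_char rfl (by simp [AxV_val]; omega) h1
          rw [AxV_val] at c1
          have hzw : z = wJ := Mi_inj c1.1 hwJ1 (c1.2.trans hMiwJ.symm)
          have := mono_adj_parts h2
          rw [hzw] at this
          exact this rfl

lemma core_rr (hk : 2 ≤ k) {S T : Set (Vt k)}
    (hd1 : (SimpleGraph.induce S (Hb k true)).ediam ≤ 2)
    (hd2 : (SimpleGraph.induce T (Hb k true)).ediam ≤ 2)
    (hcov : ∀ v, v ∈ S ∨ v ∈ T) : False := by
  have sub : ∀ (S' T' : Set (Vt k)),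
      (SimpleGraph.induce S' (Hb k true)).ediam ≤ 2 →
      (SimpleGraph.induce T' (Hb k true)).ediam ≤ 2 →
      a0 k ∈ S' → (∀ v, v ∈ S' ∨ v ∈ T') → False := by
    intro S' T' hda hdb h0 hcv
    refine red_big hk hdb (fun j hj1 hj2 => ?_)
    have hne : AxV k j (by omega) ≠ a0 k := fun h => by have := AxV_inj (h.trans a0_eq); omega
    rcases hcv (AxV k j (by omega)) with h | h
    · exact absurd (red_noA0 hda h0 h hne) not_false
    · exact h
  rcases hcov (a0 k) with h | h
  · exact sub S T hd1 hd2 h hcov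
  · exact sub T S hd2 hd1 h (fun v => (hcov v).symm)

lemma core_bb (hk : 2 ≤ k) {S T : Set (Vt k)}
    (hd1 : (SimpleGraph.induce S (Hb k false)).ediam ≤ 2)
    (hd2 : (SimpleGraph.induce T (Hb k false)).ediam ≤ 2)
    (hcov : ∀ v, v ∈ S ∨ v ∈ T) : False := by
  have no2 : ∀ (S' : Set (Vt k)), (SimpleGraph.induce S' (Hb k false)).ediam ≤ 2 →
      ∀ j j' (hj : j < 2 * k + 1) (hj' : j' < 2 * k + 1), 1 ≤ j → 1 ≤ j' → j ≠ j' →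
      AxV k j hj ∈ S' → AxV k j' hj' ∈ S' → False := by
    intro S' hd j j' hj hj' h1 h1' hne hm hm'
    have := blue_one hd hm hm' rfl rfl (by simp [AxV_val]; omega) (by simp [AxV_val]; omega)
    exact hne (AxV_inj this)
  have b1 : (1 : ℕ) < 2 * k + 1 := by omega
  have b2 : (2 : ℕ) < 2 * k + 1 := by omega
  have b3 : (3 : ℕ) < 2 * k + 1 := by omega
  rcases hcov (AxV k 1 b1) with h1 | h1 <;> rcases hcov (AxV k 2 b2) with h2 | h2 <;>
    rcases hcov (AxV k 3 b3) with h3 | h3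
  · exact no2 S hd1 1 2 b1 b2 (by omega) (by omega) (by omega) h1 h2
  · exact no2 S hd1 1 2 b1 b2 (by omega) (by omega) (by omega) h1 h2
  · exact no2 S hd1 1 3 b1 b3 (by omega) (by omega) (by omega) h1 h3
  · exact no2 T hd2 2 3 b2 b3 (by omega) (by omega) (by omega) h2 h3
  · exact no2 S hd1 2 3 b2 b3 (by omega) (by omega) (by omega) h2 h3
  · exact no2 T hd2 1 3 b1 b3 (by omega) (by omega) (by omega) h1 h3
  · exact no2 T hd2 1 2 b1 b2 (by omega) (by omega) (by omega) h1 h2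
  · exact no2 T hd2 1 2 b1 b2 (by omega) (by omega) (by omega) h1 h2

end
lemma upper_generic (G : SimpleGraph V) (col : Sym2 V → Bool) (u u' : V) (hne : u ≠ u')
    (hadj : ∀ v : V, v ≠ u → v ≠ u' → G.Adj u v ∧ G.Adj u' v) :
    HasMonoCover G col 3 := by
  by_cases hex : ∃ (b : Bool) (w : V), w ≠ u ∧ w ≠ u' ∧ col s(u, w) = b ∧ col s(u', w) = b
  · obtain ⟨b, w, hwu, hwu', hcw, hcw'⟩ := hex
    set H := G.colorSubgraph col b with hH
    set H2 := G.colorSubgraph col (!b) with hH2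
    have hGuw : G.Adj u w := (hadj w hwu hwu').1
    have hGu'w : G.Adj u' w := (hadj w hwu hwu').2
    have hAuw : H.Adj u w := ⟨hGuw, hcw⟩
    refine ⟨{x | x = u ∨ x = w ∨ H.Adj u x ∨ H.Adj w x},
            {x | x = u ∨ H2.Adj u x}, b, !b, ?_⟩
    have h1 := doubleStar_bound H _ u w (Or.inl rfl) (Or.inr (Or.inl rfl)) hAuw
      (fun x hx => hx)
    have h2 := star_bound H2 _ u (Or.inl rfl) (fun x hx => hx)
    refine ⟨h1.1, h1.2, h2.1, le_trans h2.2 (by norm_num), ?_⟩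
    rw [Set.eq_univ_iff_forall]
    intro v
    by_cases hvu : v = u
    · exact Or.inl (Or.inl hvu)
    by_cases hvu' : v = u'
    · subst hvu'
      refine Or.inl (Or.inr (Or.inr (Or.inr ⟨hGu'w.symm, ?_⟩)))
      rwa [Sym2.eq_swap]
    · have hGA := hadj v hvu hvu'
      cases hb : col s(u, v)
      · cases b
        · exact Or.inl (Or.inr (Or.inr (Or.inl ⟨hGA.1, hb⟩)))
        · exact Or.inr (Or.inr ⟨hGA.1, hb⟩)
      · cases b
        · exact Or.inr (Or.inr ⟨hGA.1, hb⟩)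
        · exact Or.inl (Or.inr (Or.inr (Or.inl ⟨hGA.1, hb⟩)))
  · push_neg at hex
    set H := G.colorSubgraph col true with hH
    refine ⟨{x | x = u ∨ H.Adj u x}, {x | x = u' ∨ H.Adj u' x}, true, true, ?_⟩
    have h1 := star_bound H _ u (Or.inl rfl) (fun x hx => hx)
    have h2 := star_bound H _ u' (Or.inl rfl) (fun x hx => hx)
    refine ⟨h1.1, le_trans h1.2 (by norm_num), h2.1, le_trans h2.2 (by norm_num), ?_⟩
    rw [Set.eq_univ_iff_forall]
    intro v
    by_cases hvu : v = u
    · exact Or.inl (Or.inl hvu)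
    by_cases hvu' : v = u'
    · exact Or.inr (Or.inl hvu')
    · have hGA := hadj v hvu hvu'
      cases hb : col s(u, v)
      · have := hex (col s(u, v)) v hvu hvu' rfl
        refine Or.inr (Or.inr ⟨hGA.2, ?_⟩)
        cases hb2 : col s(u', v)
        · exact absurd (hb2.trans hb.symm) this
        · rfl
      · exact Or.inl (Or.inr ⟨hGA.1, hb⟩)


theorem stmt2 (k : ℕ) (hk : 2 ≤ k) :
    (∀ col : Sym2 (Σ i : Fin (k + 1), Fin (if i = 0 then 2 * k + 1 else 2)) → Bool,
      HasMonoCover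
        (completeMultipartiteGraph (fun i : Fin (k + 1) => Fin (if i = 0 then 2 * k + 1 else 2)))
        col 3) ∧
    (∃ col : Sym2 (Σ i : Fin (k + 1), Fin (if i = 0 then 2 * k + 1 else 2)) → Bool,
      ¬ HasMonoCover
        (completeMultipartiteGraph (fun i : Fin (k + 1) => Fin (if i = 0 then 2 * k + 1 else 2)))
        col 2) := by
  constructor
  · intro col
    refine upper_generic _ col ⟨1, ⟨0, by rw [size_one k hk]; omega⟩⟩
      ⟨1, ⟨1, by rw [size_one k hk]; omega⟩⟩ ?_ ?_
    · intro h
      rw [Sigma.mk.inj_iff] at h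
      have h2 := h.2
      rw [heq_iff_eq] at h2
      simp [Fin.ext_iff] at h2
    · intro v hvu hvu'
      have hv1 : v.1 ≠ 1 := by
        intro hv
        rcases part_one_eq k hk v hv with h | h
        · exact hvu h
        · exact hvu' h
      constructor <;> · simp only [comap_adj, top_adj]; exact fun h => hv1 h.symm
  · refine ⟨lcol k, fun hcover => ?_⟩
    obtain ⟨S₁, S₂, b₁, b₂, c1, d1, c2, d2, huniv⟩ := hcover
    have hcov : ∀ v : Vt k, v ∈ S₁ ∨ v ∈ S₂ := by
      intro v
      have : v ∈ S₁ ∪ S₂ := by rw [huniv]; trivial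
      exact this
    have d1' : (SimpleGraph.induce S₁ ((Gk k).colorSubgraph (lcol k) b₁)).ediam ≤ 2 := by
      exact_mod_cast d1
    have d2' : (SimpleGraph.induce S₂ ((Gk k).colorSubgraph (lcol k) b₂)).ediam ≤ 2 := by
      exact_mod_cast d2
    cases b₁ <;> cases b₂
    · exact core_bb hk d1' d2' hcov
    · exact core_rb hk d2' d1' (fun v => (hcov v).symm)
    · exact core_rb hk d1' d2' hcov
    · exact core_rr hk d1' d2' hcov
end
end

section
/- Fix an integer r ≥ 2. Suppose that for every finite simple graph G and every r-coloring of the edges of G, the vertex set of G can be covered by the vertex sets of at most (r−1)·α(G) monochromatic connected subgraphs (i.e., tc_r(G) ≤ (r−1)·α(G) for every graph G). Then every finite r-partite hypergraph H satisfies τ(H) ≤ (r−1)·ν(H). -/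
open SimpleGraph

/-- `S` is a vertex cover of the hypergraph with edge set `E`: it meets every edge. -/
def IsHypVertexCover {W : Type*} (E : Finset (Finset W)) (S : Finset W) : Prop :=
  ∀ e ∈ E, ∃ v ∈ S, v ∈ e

/-- The vertex cover number `τ` of the hypergraph with edge set `E`: the least size of a
vertex cover. -/
noncomputable def hypTau {W : Type*} (E : Finset (Finset W)) : ℕ :=
  sInf {n | ∃ S : Finset W, IsHypVertexCover E S ∧ S.card = n}

/-- The matching number `ν` of the hypergraph with edge set `E`: the greatest size of a
set of pairwise disjoint edges. -/
noncomputable def hypNu {W : Type*} (E : Finset (Finset W)) : ℕ :=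
  sSup {n | ∃ M : Finset (Finset W), M ⊆ E ∧
    (∀ e ∈ M, ∀ f ∈ M, e ≠ f → Disjoint e f) ∧ M.card = n}

/-- The hypergraph with edge set `E` is `r`-partite: the vertices can be partitioned into
`r` classes such that no edge contains two distinct vertices of the same class. -/
def IsHypRPartite {W : Type*} (r : ℕ) (E : Finset (Finset W)) : Prop :=
  ∃ p : W → Fin r, ∀ e ∈ E, ∀ u ∈ e, ∀ v ∈ e, u ≠ v → p u ≠ p v

/-- The spanning subgraph of `G` consisting of the edges that receive color `b`
under the edge-coloring `c` with `r` colors. -/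
def SimpleGraph.monoSubgraph {V : Type*} {r : ℕ} (G : SimpleGraph V) (c : Sym2 V → Fin r)
    (b : Fin r) : SimpleGraph V where
  Adj u v := G.Adj u v ∧ c s(u, v) = b
  symm := ⟨fun u v h => ⟨h.1.symm, by rw [Sym2.eq_swap]; exact h.2⟩⟩
  loopless := ⟨fun u h => G.loopless.irrefl u h.1⟩

/-- The independence number `α` of a graph: the greatest size of a set of pairwise
non-adjacent vertices. -/
noncomputable def indepNum {V : Type*} (G : SimpleGraph V) : ℕ :=
  sSup {n | ∃ S : Finset V, (∀ u ∈ S, ∀ v ∈ S, ¬ G.Adj u v) ∧ S.card = n}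

/-- The vertex set of `G` can be covered by at most `t` monochromatic connected subgraphs
with respect to the `r`-coloring `c`. -/
def HasTreeCover {V : Type*} {r : ℕ} (G : SimpleGraph V) (c : Sym2 V → Fin r) (t : ℕ) : Prop :=
  ∃ (m : ℕ) (S : Fin m → Set V) (b : Fin m → Fin r), m ≤ t ∧
    (∀ i, (SimpleGraph.induce (S i) (G.monoSubgraph c (b i))).Connected) ∧
    (⋃ i, S i) = Set.univ
theorem stmt14 (r : ℕ) (hr : 2 ≤ r)
    (tc : ∀ (V : Type) [Fintype V] (G : SimpleGraph V) (c : Sym2 V → Fin r),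
      HasTreeCover G c ((r - 1) * _root_.indepNum G)) :
    ∀ (W : Type) [Fintype W] [DecidableEq W] (E : Finset (Finset W)),
      (∀ e ∈ E, e.Nonempty) → IsHypRPartite r E → hypTau E ≤ (r - 1) * hypNu E := by
  intro W _ _ E hne hpart
  classical
  obtain ⟨p, hp⟩ := hpart
  let V := {e : Finset W // e ∈ E}
  let G : SimpleGraph V :=
    { Adj := fun e f => e ≠ f ∧ ¬ Disjoint e.1 f.1
      symm := by
        refine ⟨?_⟩
        rintro e f ⟨h1, h2⟩
        exact ⟨h1.symm, fun d => h2 d.symm⟩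
      loopless := by
        refine ⟨?_⟩
        rintro e ⟨h1, _⟩
        exact h1 rfl }
  let pick : Finset W → Fin r := fun s => if h : s.Nonempty then p h.choose else ⟨0, by omega⟩
  let c : Sym2 V → Fin r := Sym2.lift ⟨fun e f => pick (e.1 ∩ f.1), by
    intro e f
    simp [Finset.inter_comm]⟩
  have hc : ∀ e f : V, G.Adj e f → ∃ w, w ∈ e.1 ∧ w ∈ f.1 ∧ p w = c s(e, f) := by
    intro e f ⟨_, hnd⟩
    have hint : (e.1 ∩ f.1).Nonempty := Finset.not_disjoint_iff_nonempty_inter.mp hnd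
    refine ⟨hint.choose, ?_, ?_, ?_⟩
    · exact (Finset.mem_inter.mp hint.choose_spec).1
    · exact (Finset.mem_inter.mp hint.choose_spec).2
    · show p hint.choose = pick (e.1 ∩ f.1)
      simp [pick, hint]
  obtain ⟨m, S, b, hm, hconn, hcov⟩ := tc V G c
  -- along a walk in a monochromatic induced subgraph, the shared vertex of color b i is constant
  have reach : ∀ i : Fin m, ∀ x y : S i,
      ((G.monoSubgraph c (b i)).induce (S i)).Walk x y →
      x = y ∨ ∃ w, p w = b i ∧ w ∈ (x : V).1 ∧ w ∈ (y : V).1 := by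
    intro i x y wk
    induction wk with
    | nil => exact Or.inl rfl
    | @cons x z y h q ih =>
      have hadj : G.Adj (x : V) (z : V) ∧ c s((x : V), (z : V)) = b i := h
      obtain ⟨w, hwx, hwz, hwp⟩ := hc _ _ hadj.1
      have hwb : p w = b i := by rw [hwp, hadj.2]
      rcases ih with rfl | ⟨w', hw'b, hw'z, hw'y⟩
      · exact Or.inr ⟨w, hwb, hwx, hwz⟩
      · have : w = w' := by
          by_contra hne'
          exact hp (z : V).1 (z : V).2 w hwz w' hw'z hne' (by rw [hwb, hw'b])
        exact Or.inr ⟨w, hwb, hwx, this ▸ hw'y⟩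
  -- for each nonempty piece, there is a single vertex hitting all its hyperedges
  have hvi : ∀ i : Fin m, (S i).Nonempty → ∃ v : W, ∀ f : V, f ∈ S i → v ∈ f.1 := by
    intro i ⟨e0, he0⟩
    by_cases hsing : ∀ f ∈ S i, f = e0
    · obtain ⟨v, hv⟩ := hne e0.1 e0.2
      exact ⟨v, fun f hf => by rw [hsing f hf]; exact hv⟩
    · push_neg at hsing
      obtain ⟨f, hf, hfe0⟩ := hsing
      obtain ⟨wk⟩ := ((hconn i).preconnected ⟨e0, he0⟩ ⟨f, hf⟩)
      rcases reach i _ _ wk with heq | ⟨w, hwb, hwe0, _⟩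
      · exact absurd (congrArg Subtype.val heq).symm hfe0
      · refine ⟨w, fun g hg => ?_⟩
        by_cases hge : g = e0
        · rw [hge]; exact hwe0
        · obtain ⟨wk'⟩ := ((hconn i).preconnected ⟨e0, he0⟩ ⟨g, hg⟩)
          rcases reach i _ _ wk' with heq' | ⟨w', hw'b, hw'e0, hw'g⟩
          · exact absurd (congrArg Subtype.val heq').symm hge
          · have : w = w' := by
              by_contra hne'
              exact hp e0.1 e0.2 w hwe0 w' hw'e0 hne' (by rw [hwb, hw'b])
            rw [this]; exact hw'g
  let T : Finset W := Finset.univ.biUnion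
    (fun i : Fin m => if h : (S i).Nonempty then {(hvi i h).choose} else ∅)
  have hTcover : IsHypVertexCover E T := by
    intro e he
    have : (⟨e, he⟩ : V) ∈ ⋃ i, S i := by rw [hcov]; trivial
    obtain ⟨i, hi⟩ := Set.mem_iUnion.mp this
    have hnonempty : (S i).Nonempty := ⟨_, hi⟩
    refine ⟨(hvi i hnonempty).choose, ?_, (hvi i hnonempty).choose_spec ⟨e, he⟩ hi⟩
    refine Finset.mem_biUnion.mpr ⟨i, Finset.mem_univ i, ?_⟩
    rw [dif_pos hnonempty]
    exact Finset.mem_singleton_self _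
  have hTcard : T.card ≤ m := by
    calc T.card ≤ ∑ i : Fin m,
        (if h : (S i).Nonempty then ({(hvi i h).choose} : Finset W) else ∅).card :=
          Finset.card_biUnion_le
      _ ≤ ∑ _i : Fin m, 1 := by
          apply Finset.sum_le_sum
          intro i _
          split_ifs <;> simp
      _ = m := by simp
  have htau : hypTau E ≤ m :=
    le_trans (Nat.sInf_le ⟨T, hTcover, rfl⟩) hTcard
  -- independence number of G is at most the matching number of the hypergraph
  have halpha : _root_.indepNum G ≤ hypNu E := by
    have hbdd : BddAbove {n | ∃ S : Finset V, (∀ u ∈ S, ∀ v ∈ S, ¬ G.Adj u v) ∧ S.card = n} := by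
      refine ⟨Fintype.card V, ?_⟩
      rintro n ⟨S, _, rfl⟩
      exact Finset.card_le_univ S
    have hmem : _root_.indepNum G ∈
        {n | ∃ S : Finset V, (∀ u ∈ S, ∀ v ∈ S, ¬ G.Adj u v) ∧ S.card = n} :=
      Nat.sSup_mem ⟨0, ∅, by simp⟩ hbdd
    obtain ⟨A, hAindep, hAcard⟩ := hmem
    let M : Finset (Finset W) := A.image Subtype.val
    have hMcard : M.card = A.card := Finset.card_image_of_injective A Subtype.val_injective
    refine le_csSup ?_ ⟨M, ?_, ?_, by rw [hMcard, hAcard]⟩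
    · refine ⟨E.card, ?_⟩
      rintro n ⟨M', hM', _, rfl⟩
      exact Finset.card_le_card hM'
    · intro e he
      obtain ⟨x, _, rfl⟩ := Finset.mem_image.mp he
      exact x.2
    · intro e he f hf hef
      obtain ⟨x, hx, rfl⟩ := Finset.mem_image.mp he
      obtain ⟨y, hy, rfl⟩ := Finset.mem_image.mp hf
      have hnadj := hAindep x hx y hy
      by_contra hd
      exact hnadj ⟨fun h => hef (congrArg Subtype.val h), hd⟩
  calc hypTau E ≤ m := htau
    _ ≤ (r - 1) * _root_.indepNum G := hm
    _ ≤ (r - 1) * hypNu E := Nat.mul_le_mul_left _ halpha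
end
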